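/- arXiv:quant-ph/0205128 — 2 statements merged into one kernel-verified Lean document; each statement's English description precedes it below -/
import Mathlib

section
/- Let ρ₀ and ρ₁ be density matrices on a finite-dimensional Hilbert space with trace distance D(ρ₀,ρ₁) = δ. Then the trace distance of the t-fold tensor powers satisfies D(ρ₀^⊗t, ρ₁^⊗t) ≥ 1 - 2·exp(-t·δ²/2). -/
open Matrix BigOperators
open scoped ComplexOrder

/-- Trace distance between two matrices, characterized as the supremum over
POVM elements `P` (with `0 ≤ P ≤ I`) of `Re Tr(P (A - B))`. -/
noncomputable def traceDist {n : Type*} [Fintype n] [DecidableEq n]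
    (A B : Matrix n n ℂ) : ℝ :=
  sSup {x : ℝ | ∃ P : Matrix n n ℂ, P.PosSemidef ∧ (1 - P).PosSemidef ∧
    x = ((P * (A - B)).trace).re}

/-- `t`-fold tensor power of a matrix. -/
noncomputable def tensorPow {n : Type*} [Fintype n] [DecidableEq n]
    (ρ : Matrix n n ℂ) (t : ℕ) : Matrix (Fin t → n) (Fin t → n) ℂ :=
  fun x y => ∏ i, ρ (x i) (y i)

set_option linter.unusedSectionVars false

namespace TDHelp


variable {a : ℝ}

noncomputable def vv (a l : ℝ) : ℝ := (1 - a) + a * Real.exp l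
noncomputable def uu (a l : ℝ) : ℝ := a * Real.exp l / vv a l

lemma vv_pos (h0 : 0 ≤ a) (h1 : a ≤ 1) (l : ℝ) : 0 < vv a l := by
  rcases lt_or_eq_of_le h1 with h | h
  · have : 0 ≤ a * Real.exp l := mul_nonneg h0 (Real.exp_pos l).le
    unfold vv; linarith
  · unfold vv; rw [← h]; simp; positivity

lemma uu_nonneg (h0 : 0 ≤ a) (h1 : a ≤ 1) (l : ℝ) : 0 ≤ uu a l :=
  div_nonneg (mul_nonneg h0 (Real.exp_pos l).le) (vv_pos h0 h1 l).le

lemma uu_le_one (h0 : 0 ≤ a) (h1 : a ≤ 1) (l : ℝ) : uu a l ≤ 1 := by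
  rw [uu, div_le_one (vv_pos h0 h1 l)]
  unfold vv; linarith

lemma uu_zero (h0 : 0 ≤ a) (h1 : a ≤ 1) : uu a 0 = a := by
  have := vv_pos h0 h1 0
  unfold uu vv
  simp

lemma hasDerivAt_vv (l : ℝ) : HasDerivAt (vv a) (a * Real.exp l) l := by
  exact (HasDerivAt.const_add (1 - a) ((Real.hasDerivAt_exp l).const_mul a))

lemma hasDerivAt_uu (h0 : 0 ≤ a) (h1 : a ≤ 1) (l : ℝ) :
    HasDerivAt (uu a) (uu a l * (1 - uu a l)) l := by
  have hv := vv_pos h0 h1 l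
  have := ((Real.hasDerivAt_exp l).const_mul a).div (hasDerivAt_vv l) hv.ne'
  refine this.congr_deriv ?_
  unfold uu vv at *
  field_simp

lemma uu_deriv_mem (h0 : 0 ≤ a) (h1 : a ≤ 1) (l : ℝ) :
    uu a l * (1 - uu a l) ∈ Set.Icc (0:ℝ) (1/4) := by
  have h := uu_nonneg h0 h1 l
  have h' := uu_le_one h0 h1 l
  constructor
  · nlinarith
  · nlinarith [sq_nonneg (uu a l - 1/2)]

/-- u(l) ≤ a + l/4 for l ≥ 0, and a + l/4 ≤ u(l) for l ≤ 0. -/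
lemma uu_le (h0 : 0 ≤ a) (h1 : a ≤ 1) {l : ℝ} (hl : 0 < l) : uu a l ≤ a + l / 4 := by
  obtain ⟨c, _, hc⟩ := exists_hasDerivAt_eq_slope (uu a) (fun x => uu a x * (1 - uu a x)) hl
    (Continuous.continuousOn (by
      have : ∀ x, DifferentiableAt ℝ (uu a) x :=
        fun x => (hasDerivAt_uu h0 h1 x).differentiableAt
      exact (Differentiable.continuous (fun x => (this x) : Differentiable ℝ (uu a)))))
    (fun x _ => hasDerivAt_uu h0 h1 x)
  have hb := (uu_deriv_mem h0 h1 c).2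
  rw [uu_zero h0 h1] at hc
  have : (uu a l - a) / (l - 0) ≤ 1/4 := by rw [← hc]; exact hb
  rw [div_le_iff₀ (by linarith)] at this
  linarith

lemma le_uu (h0 : 0 ≤ a) (h1 : a ≤ 1) {l : ℝ} (hl : l < 0) : a + l / 4 ≤ uu a l := by
  obtain ⟨c, _, hc⟩ := exists_hasDerivAt_eq_slope (uu a) (fun x => uu a x * (1 - uu a x)) hl
    (Continuous.continuousOn (by
      have : ∀ x, DifferentiableAt ℝ (uu a) x :=
        fun x => (hasDerivAt_uu h0 h1 x).differentiableAt
      exact (Differentiable.continuous (fun x => (this x) : Differentiable ℝ (uu a)))))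
    (fun x _ => hasDerivAt_uu h0 h1 x)
  have hb := (uu_deriv_mem h0 h1 c).2
  rw [uu_zero h0 h1] at hc
  have : (a - uu a l) / (0 - l) ≤ 1/4 := by rw [← hc]; exact hb
  rw [div_le_iff₀ (by linarith)] at this
  linarith

noncomputable def hh (a l : ℝ) : ℝ := a * l + l ^ 2 / 8 - Real.log (vv a l)

lemma hasDerivAt_hh (h0 : 0 ≤ a) (h1 : a ≤ 1) (l : ℝ) :
    HasDerivAt (hh a) (a + l / 4 - uu a l) l := by
  have hv := vv_pos h0 h1 l
  have hL : HasDerivAt (fun x => Real.log (vv a x)) (uu a l) l := by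
    have := (hasDerivAt_vv (a := a) l).log hv.ne'
    simpa [uu] using this
  have h1' : HasDerivAt (fun x : ℝ => a * x + x ^ 2 / 8) (a + l / 4) l := by
    have := ((hasDerivAt_id l).const_mul a).add
      (((hasDerivAt_pow 2 l)).div_const 8)
    refine this.congr_deriv ?_
    norm_num; ring
  exact h1'.sub hL

lemma hh_nonneg (h0 : 0 ≤ a) (h1 : a ≤ 1) (l : ℝ) : 0 ≤ hh a l := by
  have hcont : Continuous (hh a) :=
    Differentiable.continuous (fun x => (hasDerivAt_hh h0 h1 x).differentiableAt : Differentiable ℝ (hh a))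
  have h0' : hh a 0 = 0 := by simp [hh, vv]
  rcases lt_trichotomy l 0 with hl | hl | hl
  · obtain ⟨c, hcmem, hc⟩ := exists_hasDerivAt_eq_slope (hh a)
      (fun x => a + x / 4 - uu a x) hl hcont.continuousOn
      (fun x _ => hasDerivAt_hh h0 h1 x)
    have := le_uu h0 h1 hcmem.2
    have hslope : (hh a 0 - hh a l) / (0 - l) ≤ 0 := by rw [← hc]; linarith
    rw [h0'] at hslope
    rw [div_le_iff₀ (by linarith)] at hslope
    linarith
  · simp [hl, h0']
  · obtain ⟨c, hcmem, hc⟩ := exists_hasDerivAt_eq_slope (hh a)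
      (fun x => a + x / 4 - uu a x) hl hcont.continuousOn
      (fun x _ => hasDerivAt_hh h0 h1 x)
    have := uu_le h0 h1 hcmem.1
    have hslope : 0 ≤ (hh a l - hh a 0) / (l - 0) := by rw [← hc]; linarith
    rw [h0'] at hslope
    rw [le_div_iff₀ (by linarith)] at hslope
    linarith

lemma hoeffding (h0 : 0 ≤ a) (h1 : a ≤ 1) (l : ℝ) :
    a * Real.exp l + (1 - a) ≤ Real.exp (a * l + l ^ 2 / 8) := by
  have hv := vv_pos h0 h1 l
  have := hh_nonneg h0 h1 l
  have hlog : Real.log (vv a l) ≤ a * l + l ^ 2 / 8 := by unfold hh at this; linarith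
  calc a * Real.exp l + (1 - a) = vv a l := by unfold vv; ring
  _ = Real.exp (Real.log (vv a l)) := (Real.exp_log hv).symm
  _ ≤ _ := Real.exp_le_exp.2 hlog


variable {n : Type*} [Fintype n] [DecidableEq n]

lemma diag_nonneg {M : Matrix n n ℂ} (hM : M.PosSemidef) (i : n) : 0 ≤ M i i := by
  exact hM.diag_nonneg

lemma trace_nonneg {M : Matrix n n ℂ} (hM : M.PosSemidef) : 0 ≤ M.trace := by
  rw [Matrix.trace]
  exact Finset.sum_nonneg fun i _ => diag_nonneg hM i

lemma trace_mul_nonneg {A B : Matrix n n ℂ} (hA : A.PosSemidef) (hB : B.PosSemidef) :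
    0 ≤ (A * B).trace := by
  obtain ⟨C, rfl⟩ : ∃ C : Matrix n n ℂ, A = Cᴴ * C :=
    (by open scoped MatrixOrder in exact CStarAlgebra.nonneg_iff_eq_star_mul_self.mp hA.nonneg)
  have h1 : (Cᴴ * C * B).trace = (C * B * Cᴴ).trace := by
    rw [Matrix.mul_assoc, Matrix.trace_mul_comm, Matrix.mul_assoc]
  rw [h1]
  exact trace_nonneg (hB.mul_mul_conjTranspose_same C)

lemma eq_re_of_nonneg {z : ℂ} (h : 0 ≤ z) : z = (z.re : ℂ) := by
  rw [Complex.nonneg_iff] at h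
  exact Complex.ext rfl (by simp [h.2.symm])

/-- Tensor product of a family of matrices. -/
noncomputable def tfam {t : ℕ} (E : Fin t → Matrix n n ℂ) :
    Matrix (Fin t → n) (Fin t → n) ℂ :=
  fun x y => ∏ i, E i (x i) (y i)

lemma tfam_mul {t : ℕ} (E F : Fin t → Matrix n n ℂ) :
    tfam E * tfam F = tfam (fun i => E i * F i) := by
  funext x y
  simp only [tfam, Matrix.mul_apply]
  rw [show (∑ z : Fin t → n, (∏ i, E i (x i) (z i)) * ∏ i, F i (z i) (y i))
      = ∑ z : Fin t → n, ∏ i, (E i (x i) (z i) * F i (z i) (y i)) from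
    Finset.sum_congr rfl fun z _ => (Finset.prod_mul_distrib).symm]
  exact (Fintype.prod_sum (fun i j => E i (x i) j * F i j (y i))).symm

lemma tfam_conjTranspose {t : ℕ} (E : Fin t → Matrix n n ℂ) :
    (tfam E)ᴴ = tfam (fun i => (E i)ᴴ) := by
  funext x y
  simp [tfam, Matrix.conjTranspose_apply, star_prod]

lemma tfam_posSemidef {t : ℕ} {E : Fin t → Matrix n n ℂ} (hE : ∀ i, (E i).PosSemidef) :
    (tfam E).PosSemidef := by
  choose C hC using fun i => (show ∃ C : Matrix n n ℂ, E i = Cᴴ * C from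
    (by open scoped MatrixOrder in exact CStarAlgebra.nonneg_iff_eq_star_mul_self.mp (hE i).nonneg))
  have : tfam E = (tfam C)ᴴ * tfam C := by
    rw [tfam_conjTranspose, tfam_mul]
    exact congrArg tfam (funext fun i => hC i)
  rw [this]
  exact Matrix.posSemidef_conjTranspose_mul_self _

lemma tfam_trace {t : ℕ} (E : Fin t → Matrix n n ℂ) :
    (tfam E).trace = ∏ i, (E i).trace := by
  simp only [Matrix.trace, Matrix.diag, tfam]
  exact (Fintype.prod_sum (fun i j => E i j j)).symm

lemma tfam_one {t : ℕ} :
    tfam (fun _ : Fin t => (1 : Matrix n n ℂ)) = 1 := by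
  funext x y
  by_cases h : x = y
  · subst h; simp [tfam, Matrix.one_apply]
  · obtain ⟨i, hi⟩ := Function.ne_iff.1 h
    rw [tfam, Finset.prod_eq_zero (Finset.mem_univ i) (by simp [Matrix.one_apply, hi])]
    simp [Matrix.one_apply, h]

lemma tfam_sum_bool {t : ℕ} (G : Fin t → Bool → Matrix n n ℂ) :
    ∑ s : Fin t → Bool, tfam (fun i => G i (s i)) = tfam (fun i => G i false + G i true) := by
  funext x y
  simp only [Matrix.sum_apply, tfam, Matrix.add_apply]
  rw [show (∏ i, (G i false (x i) (y i) + G i true (x i) (y i)))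
      = ∏ i, ∑ b : Bool, G i b (x i) (y i) by
    exact Finset.prod_congr rfl fun i _ => by rw [Fintype.sum_bool]; ring]
  rw [Fintype.prod_sum (fun i b => G i b (x i) (y i))]


/-- number of `true`s in a boolean string, as a real. -/
def kk {t : ℕ} (s : Fin t → Bool) : ℝ := ∑ i, (if s i then (1:ℝ) else 0)

noncomputable def ww (a : ℝ) (b : Bool) : ℝ := if b then a else 1 - a

lemma ww_nonneg {a : ℝ} (h0 : 0 ≤ a) (h1 : a ≤ 1) (b : Bool) : 0 ≤ ww a b := by
  cases b <;> simp [ww] <;> linarith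

lemma sum_prod_ww {t : ℕ} (a : ℝ) :
    ∑ s : Fin t → Bool, ∏ i, ww a (s i) = 1 := by
  rw [← Fintype.prod_sum (fun (_ : Fin t) b => ww a b)]
  simp [ww]

lemma chernoff {t : ℕ} (w : Bool → ℝ) (hw : ∀ b, 0 ≤ w b) (lam θ : ℝ)
    (S : Finset (Fin t → Bool)) (hS : ∀ s ∈ S, θ ≤ lam * kk s) :
    ∑ s ∈ S, ∏ i, w (s i) ≤
      Real.exp (-θ) * (w true * Real.exp lam + w false) ^ t := by
  have key : ∀ s : Fin t → Bool,
      Real.exp (lam * kk s - θ) * ∏ i, w (s i)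
        = Real.exp (-θ) * ∏ i, (w (s i) * Real.exp (lam * (if s i then (1:ℝ) else 0))) := by
    intro s
    rw [Finset.prod_mul_distrib, ← Real.exp_sum, ← Finset.mul_sum, kk]
    rw [show lam * (∑ i, (if s i then (1:ℝ) else 0)) - θ
        = -θ + ∑ i, lam * (if s i then (1:ℝ) else 0) by rw [Finset.mul_sum]; ring]
    rw [Real.exp_add, Finset.mul_sum]
    ring
  calc ∑ s ∈ S, ∏ i, w (s i)
      ≤ ∑ s ∈ S, Real.exp (lam * kk s - θ) * ∏ i, w (s i) := by
        refine Finset.sum_le_sum fun s hs => ?_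
        refine le_mul_of_one_le_left (Finset.prod_nonneg fun i _ => hw _) ?_
        rw [← Real.exp_zero]
        exact Real.exp_le_exp.2 (by linarith [hS s hs])
    _ ≤ ∑ s : Fin t → Bool, Real.exp (lam * kk s - θ) * ∏ i, w (s i) := by
        refine Finset.sum_le_sum_of_subset_of_nonneg (Finset.subset_univ S) fun s _ _ => ?_
        exact mul_nonneg (Real.exp_pos _).le (Finset.prod_nonneg fun i _ => hw _)
    _ = Real.exp (-θ) * ∑ s : Fin t → Bool,
          ∏ i, (w (s i) * Real.exp (lam * (if s i then (1:ℝ) else 0))) := by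
        rw [Finset.mul_sum]; exact Finset.sum_congr rfl fun s _ => key s
    _ = Real.exp (-θ) * ∏ _i : Fin t,
          ∑ b : Bool, (w b * Real.exp (lam * (if b then (1:ℝ) else 0))) := by
        rw [← Fintype.prod_sum (fun (_ : Fin t) (b : Bool) =>
          w b * Real.exp (lam * (if b then (1:ℝ) else 0)))]
    _ = Real.exp (-θ) * (w true * Real.exp lam + w false) ^ t := by
        rw [Finset.prod_const]
        simp [Fintype.sum_bool]

lemma tail_bound {t : ℕ} {a : ℝ} (h0 : 0 ≤ a) (h1 : a ≤ 1) (lam θ : ℝ)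
    (S : Finset (Fin t → Bool)) (hS : ∀ s ∈ S, θ ≤ lam * kk s) :
    ∑ s ∈ S, ∏ i, ww a (s i) ≤ Real.exp (-θ + t * (a * lam + lam ^ 2 / 8)) := by
  calc ∑ s ∈ S, ∏ i, ww a (s i)
      ≤ Real.exp (-θ) * (ww a true * Real.exp lam + ww a false) ^ t :=
        chernoff (ww a) (ww_nonneg h0 h1) lam θ S hS
    _ ≤ Real.exp (-θ) * (Real.exp (a * lam + lam ^ 2 / 8)) ^ t := by
        refine mul_le_mul_of_nonneg_left (pow_le_pow_left₀ ?_ ?_ t) (Real.exp_pos _).le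
        · have : (0:ℝ) ≤ a * Real.exp lam := mul_nonneg h0 (Real.exp_pos _).le
          simp only [ww]; simp; linarith
        · simpa [ww] using hoeffding h0 h1 lam
    _ = Real.exp (-θ + t * (a * lam + lam ^ 2 / 8)) := by
        rw [← Real.exp_nat_mul, ← Real.exp_add]

lemma sum_posSemidef {m ι : Type*} [Fintype m] (S : Finset ι) (f : ι → Matrix m m ℂ)
    (h : ∀ i ∈ S, (f i).PosSemidef) : (∑ i ∈ S, f i).PosSemidef := by
  classical
  induction S using Finset.induction with
  | empty => simpa using (Matrix.PosSemidef.zero : (0 : Matrix m m ℂ).PosSemidef)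
  | @insert a s hx ih =>
    rw [Finset.sum_insert hx]
    exact (h a (Finset.mem_insert_self a s)).add
      (ih fun i hi => h i (Finset.mem_insert_of_mem hi))

lemma traceDist_bddAbove {m : Type*} [Fintype m] [DecidableEq m] {A B : Matrix m m ℂ}
    (hA : A.PosSemidef) (hB : B.PosSemidef) :
    BddAbove {x : ℝ | ∃ P : Matrix m m ℂ, P.PosSemidef ∧ (1 - P).PosSemidef ∧
      x = ((P * (A - B)).trace).re} := by
  refine ⟨A.trace.re, ?_⟩
  rintro x ⟨P, hP, hP1, rfl⟩
  have h1 : (P * (A - B)).trace = (P * A).trace - (P * B).trace := by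
    rw [Matrix.mul_sub, Matrix.trace_sub]
  have h2 := (Complex.nonneg_iff.1 (trace_mul_nonneg hP hB)).1
  have h3 := (Complex.nonneg_iff.1 (trace_mul_nonneg hP1 hA)).1
  have h4 : ((1 - P) * A).trace = A.trace - (P * A).trace := by
    rw [Matrix.sub_mul, Matrix.trace_sub, Matrix.one_mul]
  rw [h4] at h3
  rw [h1]
  simp only [Complex.sub_re] at h3 ⊢
  linarith

lemma traceDist_zero_mem {m : Type*} [Fintype m] [DecidableEq m] (A B : Matrix m m ℂ) :
    (0:ℝ) ∈ {x : ℝ | ∃ P : Matrix m m ℂ, P.PosSemidef ∧ (1 - P).PosSemidef ∧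
      x = ((P * (A - B)).trace).re} := by
  refine ⟨0, Matrix.PosSemidef.zero, ?_, by simp⟩
  simpa using (Matrix.PosSemidef.one : (1 : Matrix m m ℂ).PosSemidef)

end TDHelp

/-- If `D(ρ₀, ρ₁) = δ` for density matrices `ρ₀, ρ₁`, then
`D(ρ₀^⊗t, ρ₁^⊗t) ≥ 1 - 2 exp(-t δ²/2)`. -/
theorem trace_dist_tensor_pow {n : Type*} [Fintype n] [DecidableEq n]
    (ρ₀ ρ₁ : Matrix n n ℂ) (h₀ : ρ₀.PosSemidef) (h₁ : ρ₁.PosSemidef)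
    (ht₀ : ρ₀.trace = 1) (ht₁ : ρ₁.trace = 1)
    (δ : ℝ) (hδ : traceDist ρ₀ ρ₁ = δ) (t : ℕ) :
    traceDist (tensorPow ρ₀ t) (tensorPow ρ₁ t) ≥
      1 - 2 * Real.exp (-(t : ℝ) * δ ^ 2 / 2) := by
  classical
  open TDHelp in
  set A := tensorPow ρ₀ t with hAdef
  set B := tensorPow ρ₁ t with hBdef
  have hAt : A = TDHelp.tfam (fun _ : Fin t => ρ₀) := rfl
  have hBt : B = TDHelp.tfam (fun _ : Fin t => ρ₁) := rfl
  have hA : A.PosSemidef := hAt ▸ TDHelp.tfam_posSemidef (fun _ => h₀)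
  have hB : B.PosSemidef := hBt ▸ TDHelp.tfam_posSemidef (fun _ => h₁)
  have hBdd := TDHelp.traceDist_bddAbove hA hB
  have hmem0 := TDHelp.traceDist_zero_mem A B
  have hTDnn : 0 ≤ traceDist A B := le_csSup hBdd hmem0
  have hδnn : 0 ≤ δ := by
    rw [← hδ]
    exact le_csSup (TDHelp.traceDist_bddAbove h₀ h₁) (TDHelp.traceDist_zero_mem ρ₀ ρ₁)
  -- key step: for every 0 < ε < δ
  have key : ∀ ε : ℝ, 0 < ε → ε < δ →
      1 - 2 * Real.exp (-(t:ℝ) * (δ - ε) ^ 2 / 2) ≤ traceDist A B := by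
    intro ε hε hεδ
    obtain ⟨x, hxmem, hx⟩ := exists_lt_of_lt_csSup
      ⟨0, TDHelp.traceDist_zero_mem ρ₀ ρ₁⟩
      (show δ - ε < sSup _ from by rw [← traceDist, hδ]; linarith)
    obtain ⟨P, hP, hP1, rfl⟩ := hxmem
    set p := ((P * ρ₀).trace).re with hpdef
    set q := ((P * ρ₁).trace).re with hqdef
    have hp0 : (P * ρ₀).trace = (p:ℂ) := TDHelp.eq_re_of_nonneg (TDHelp.trace_mul_nonneg hP h₀)
    have hq0 : (P * ρ₁).trace = (q:ℂ) := TDHelp.eq_re_of_nonneg (TDHelp.trace_mul_nonneg hP h₁)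
    have hpn : 0 ≤ p := (Complex.nonneg_iff.1 (TDHelp.trace_mul_nonneg hP h₀)).1
    have hqn : 0 ≤ q := (Complex.nonneg_iff.1 (TDHelp.trace_mul_nonneg hP h₁)).1
    have h1p : ((1 - P) * ρ₀).trace = 1 - (p:ℂ) := by
      rw [Matrix.sub_mul, Matrix.trace_sub, Matrix.one_mul, ht₀, hp0]
    have h1q : ((1 - P) * ρ₁).trace = 1 - (q:ℂ) := by
      rw [Matrix.sub_mul, Matrix.trace_sub, Matrix.one_mul, ht₁, hq0]
    have hp1 : p ≤ 1 := by
      have h := (Complex.nonneg_iff.1 (TDHelp.trace_mul_nonneg hP1 h₀)).1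
      rw [h1p] at h
      simp at h
      linarith
    have hq1 : q ≤ 1 := by
      have h := (Complex.nonneg_iff.1 (TDHelp.trace_mul_nonneg hP1 h₁)).1
      rw [h1q] at h
      simp at h
      linarith
    have hx' : δ - ε < p - q := by
      have hh : (P * (ρ₀ - ρ₁)).trace = (p:ℂ) - q := by
        rw [Matrix.mul_sub, Matrix.trace_sub, hp0, hq0]
      rw [hh] at hx
      simpa using hx
    set γ := p - q with hγ
    have hγpos : 0 < γ := by linarith
    set E : Bool → Matrix n n ℂ := fun b => if b then P else 1 - P with hE
    have hEpsd : ∀ b, (E b).PosSemidef := by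
      intro b; cases b
      · simpa [hE] using hP1
      · simpa [hE] using hP
    set θ₀ : ℝ := (t:ℝ) * (p + q) / 2 with hθ₀
    set S : Finset (Fin t → Bool) := Finset.univ.filter (fun s => θ₀ ≤ TDHelp.kk s) with hSdef
    set Q : Matrix (Fin t → n) (Fin t → n) ℂ :=
      ∑ s ∈ S, TDHelp.tfam (fun i => E (s i)) with hQ
    have hQpsd : Q.PosSemidef :=
      TDHelp.sum_posSemidef S _ (fun s _ => TDHelp.tfam_posSemidef (fun i => hEpsd (s i)))
    have hsum_all : ∑ s : Fin t → Bool, TDHelp.tfam (fun i => E (s i)) = 1 := by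
      rw [TDHelp.tfam_sum_bool (fun _ b => E b)]
      have h2 : (fun _ : Fin t => E false + E true) = fun _ : Fin t => (1 : Matrix n n ℂ) := by
        funext i; simp [hE]
      rw [h2, TDHelp.tfam_one]
    have hcompl : 1 - Q = ∑ s ∈ Sᶜ, TDHelp.tfam (fun i => E (s i)) := by
      have h3 := Finset.sum_compl_add_sum S (fun s => TDHelp.tfam (fun i => E (s i)))
      rw [hsum_all] at h3
      rw [hQ, ← h3]
      abel
    have hQ1psd : (1 - Q).PosSemidef := by
      rw [hcompl]
      exact TDHelp.sum_posSemidef _ _ (fun s _ => TDHelp.tfam_posSemidef (fun i => hEpsd (s i)))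
    have hEtr0 : ∀ b, (E b * ρ₀).trace = ((TDHelp.ww p b : ℝ) : ℂ) := by
      intro b; cases b
      · simp only [hE, TDHelp.ww, Bool.false_eq_true, if_false]
        rw [h1p]; push_cast; ring
      · simp only [hE, TDHelp.ww, if_true]
        rw [hp0]
    have hEtr1 : ∀ b, (E b * ρ₁).trace = ((TDHelp.ww q b : ℝ) : ℂ) := by
      intro b; cases b
      · simp only [hE, TDHelp.ww, Bool.false_eq_true, if_false]
        rw [h1q]; push_cast; ring
      · simp only [hE, TDHelp.ww, if_true]
        rw [hq0]
    set Fp : ℝ := ∑ s ∈ S, ∏ i, TDHelp.ww p (s i) with hFpdef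
    set Fq : ℝ := ∑ s ∈ S, ∏ i, TDHelp.ww q (s i) with hFqdef
    have htraceQ : ∀ (ρ : Matrix n n ℂ) (a : ℝ),
        (∀ b, (E b * ρ).trace = ((TDHelp.ww a b : ℝ) : ℂ)) →
        (Q * TDHelp.tfam (fun _ : Fin t => ρ)).trace
          = ((∑ s ∈ S, ∏ i, TDHelp.ww a (s i) : ℝ) : ℂ) := by
      intro ρ a htr
      rw [hQ, Finset.sum_mul, Matrix.trace_sum]
      have h5 : ∀ s ∈ S, (TDHelp.tfam (fun i => E (s i)) * TDHelp.tfam (fun _ : Fin t => ρ)).trace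
          = ((∏ i, TDHelp.ww a (s i) : ℝ) : ℂ) := by
        intro s _
        rw [TDHelp.tfam_mul, TDHelp.tfam_trace]
        push_cast
        exact Finset.prod_congr rfl fun i _ => htr (s i)
      rw [Finset.sum_congr rfl h5]
      push_cast
      rfl
    have htrQAB : (Q * (A - B)).trace = ((Fp - Fq : ℝ) : ℂ) := by
      rw [Matrix.mul_sub, Matrix.trace_sub, hAt, hBt,
        htraceQ ρ₀ p hEtr0, htraceQ ρ₁ q hEtr1, hFpdef, hFqdef]
      push_cast
      ring
    have hmemQ : (Fp - Fq) ∈ {x : ℝ | ∃ P : Matrix (Fin t → n) (Fin t → n) ℂ,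
        P.PosSemidef ∧ (1 - P).PosSemidef ∧ x = ((P * (A - B)).trace).re} :=
      ⟨Q, hQpsd, hQ1psd, by rw [htrQAB]; simp⟩
    have hTD : Fp - Fq ≤ traceDist A B := le_csSup hBdd hmemQ
    -- Chernoff bounds
    have hFq : Fq ≤ Real.exp (-((t:ℝ) * γ ^ 2 / 2)) := by
      have hb := TDHelp.tail_bound hqn hq1 (2 * γ) (2 * γ * θ₀) S (fun s hs => by
        have h6 : θ₀ ≤ TDHelp.kk s := (Finset.mem_filter.1 hs).2
        nlinarith)
      have h7 : -(2 * γ * θ₀) + (t:ℝ) * (q * (2 * γ) + (2 * γ) ^ 2 / 8)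
          = -((t:ℝ) * γ ^ 2 / 2) := by rw [hγ, hθ₀]; ring
      rw [h7] at hb
      exact hb
    have hFp : 1 - Fp ≤ Real.exp (-((t:ℝ) * γ ^ 2 / 2)) := by
      have h8 : 1 - Fp = ∑ s ∈ Sᶜ, ∏ i, TDHelp.ww p (s i) := by
        have h9 := Finset.sum_compl_add_sum S (fun s => ∏ i, TDHelp.ww p (s i))
        rw [TDHelp.sum_prod_ww (t := t) p] at h9
        rw [hFpdef, ← h9]
        ring
      rw [h8]
      have hb := TDHelp.tail_bound hpn hp1 (-(2 * γ)) (-(2 * γ) * θ₀) Sᶜ (fun s hs => by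
        have h6 : ¬ (θ₀ ≤ TDHelp.kk s) := by
          have := Finset.mem_compl.1 hs
          simpa [hSdef] using this
        have h6' : TDHelp.kk s ≤ θ₀ := le_of_not_ge h6
        nlinarith)
      have h7 : -(-(2 * γ) * θ₀) + (t:ℝ) * (p * (-(2 * γ)) + (-(2 * γ)) ^ 2 / 8)
          = -((t:ℝ) * γ ^ 2 / 2) := by rw [hγ, hθ₀]; ring
      rw [h7] at hb
      exact hb
    have hmono : Real.exp (-((t:ℝ) * γ ^ 2 / 2)) ≤ Real.exp (-(t:ℝ) * (δ - ε) ^ 2 / 2) := by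
      apply Real.exp_le_exp.2
      have h1 : δ - ε ≤ γ := le_of_lt hx'
      have h2 : 0 ≤ δ - ε := by linarith
      have h3 : (δ - ε) ^ 2 ≤ γ ^ 2 := by nlinarith
      have h4 := mul_le_mul_of_nonneg_left h3 (Nat.cast_nonneg (α := ℝ) t)
      generalize hX : (δ - ε) ^ 2 = X at *
      generalize hY : γ ^ 2 = Y at *
      generalize hT : (t:ℝ) = T at *
      linarith
    linarith
  -- finish: take the limit ε → 0⁺, or handle δ = 0
  rcases eq_or_lt_of_le hδnn with hδ0 | hδ0
  · rw [← hδ0]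
    have h10 : Real.exp (-(t:ℝ) * (0:ℝ) ^ 2 / 2) = 1 := by norm_num
    rw [h10]
    rw [ge_iff_le]
    linarith
  · rw [ge_iff_le]
    have hten : Filter.Tendsto (fun ε : ℝ => 1 - 2 * Real.exp (-(t:ℝ) * (δ - ε) ^ 2 / 2))
        (nhdsWithin 0 (Set.Ioi 0)) (nhds (1 - 2 * Real.exp (-(t:ℝ) * δ ^ 2 / 2))) := by
      apply Filter.Tendsto.mono_left ?_ nhdsWithin_le_nhds
      have hc : Continuous (fun ε : ℝ => 1 - 2 * Real.exp (-(t:ℝ) * (δ - ε) ^ 2 / 2)) := by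
        fun_prop
      have := hc.tendsto 0
      simpa using this
    refine le_of_tendsto hten ?_
    refine Filter.eventually_of_mem (Ioo_mem_nhdsGT_of_mem ⟨le_refl 0, hδ0⟩) ?_
    intro ε hε
    exact key ε hε.1 hε.2
end

section
/- Let |0̃⟩, |1̃⟩ be unit vectors in a Hilbert space H, and V₀, V₁ = I - V₀ complementary orthogonal projectors with ⟨0̃|V₀|0̃⟩ = p₀ and ⟨1̃|V₁|1̃⟩ = p₁. Let U = V₀ - V₁ (the conditional phase flip). Then |⟨φ| (1/√2)(|0̃⟩ - |1̃⟩)| ≥ p₀ + p₁ - 1, where |φ⟩ = U·(1/√2)(|0̃⟩ + |1̃⟩). -/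
open scoped InnerProductSpace

/-- Core of the distinguish-to-disturb lemma: for orthogonal projectors
`V₀ + V₁ = I` with `⟨0̃|V₀|0̃⟩ = p₀`, `⟨1̃|V₁|1̃⟩ = p₁`, the conditional phase
flip `U = V₀ - V₁` maps `(|0̃⟩+|1̃⟩)/√2` to a state whose overlap with
`(|0̃⟩-|1̃⟩)/√2` has absolute value at least `p₀ + p₁ - 1`. -/
theorem phase_flip_overlap {H : Type*} [NormedAddCommGroup H]
    [InnerProductSpace ℂ H]
    (V₀ : H →ₗ[ℂ] H)
    (hidem : V₀ ∘ₗ V₀ = V₀)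
    (hsa : ∀ x y : H, ⟪V₀ x, y⟫_ℂ = ⟪x, V₀ y⟫_ℂ)
    (t0 t1 : H) (ht0 : ‖t0‖ = 1) (ht1 : ‖t1‖ = 1)
    (p₀ p₁ : ℝ)
    (hp₀ : p₀ = (⟪t0, V₀ t0⟫_ℂ).re)
    (hp₁ : p₁ = (⟪t1, ((LinearMap.id - V₀ : H →ₗ[ℂ] H)) t1⟫_ℂ).re)
    (φ : H)
    (hφ : φ = ((V₀ - (LinearMap.id - V₀) : H →ₗ[ℂ] H)) ((1 / Real.sqrt 2 : ℂ) • (t0 + t1))) :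
    ‖⟪φ, (1 / Real.sqrt 2 : ℂ) • (t0 - t1)⟫_ℂ‖ ≥ p₀ + p₁ - 1 := by
  have hc : (starRingEnd ℂ) (1 / Real.sqrt 2 : ℂ) * (1 / Real.sqrt 2 : ℂ) = (1/2 : ℂ) := by
    have h2 : ((Real.sqrt 2 : ℝ) : ℂ) * ((Real.sqrt 2 : ℝ) : ℂ) = 2 := by
      norm_cast
      rw [Real.mul_self_sqrt]; norm_num
    have hns : ((Real.sqrt 2 : ℝ) : ℂ) ≠ 0 := by
      simp [Complex.ofReal_ne_zero]
    simp only [map_div₀, map_one, Complex.conj_ofReal]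
    field_simp
    linear_combination -h2
  have h00 : ⟪t0, t0⟫_ℂ = 1 := by
    rw [inner_self_eq_norm_sq_to_K, ht0]; norm_num
  have h11 : ⟪t1, t1⟫_ℂ = 1 := by
    rw [inner_self_eq_norm_sq_to_K, ht1]; norm_num
  have hz : ⟪φ, (1 / Real.sqrt 2 : ℂ) • (t0 - t1)⟫_ℂ
      = (1/2 : ℂ) * (⟪V₀ t0, t0⟫_ℂ + ⟪V₀ t0, t0⟫_ℂ - 1 + 2*⟪V₀ t1, t0⟫_ℂ - ⟪t1, t0⟫_ℂ
          - 2*⟪V₀ t0, t1⟫_ℂ + ⟪t0, t1⟫_ℂ - ⟪V₀ t1, t1⟫_ℂ - ⟪V₀ t1, t1⟫_ℂ + 1) := by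
    rw [hφ]
    simp only [LinearMap.sub_apply, LinearMap.id_apply, map_smul, map_add,
      inner_smul_left, inner_smul_right, inner_sub_left, inner_add_left,
      inner_sub_right, h00, h11]
    rw [show (1/2:ℂ) = (starRingEnd ℂ) (1 / Real.sqrt 2 : ℂ) * (1 / Real.sqrt 2 : ℂ) from hc.symm]
    ring
  have hcross : ⟪V₀ t0, t1⟫_ℂ = (starRingEnd ℂ) ⟪V₀ t1, t0⟫_ℂ := by
    rw [inner_conj_symm, hsa]
  have h10 : ⟪t1, t0⟫_ℂ = (starRingEnd ℂ) ⟪t0, t1⟫_ℂ := by rw [inner_conj_symm]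
  have hv0 : (⟪V₀ t0, t0⟫_ℂ).re = p₀ := by
    rw [hsa, hp₀]
  have hv1 : (⟪V₀ t1, t1⟫_ℂ).re = 1 - p₁ := by
    rw [hsa]
    have := hp₁
    simp only [LinearMap.sub_apply, LinearMap.id_apply, inner_sub_right, h11] at this
    simp only [Complex.sub_re, Complex.one_re] at this
    linarith
  have c1 : (⟪t1, t0⟫_ℂ).re = (⟪t0, t1⟫_ℂ).re := by rw [h10, Complex.conj_re]
  have c2 : (⟪V₀ t0, t1⟫_ℂ).re = (⟪V₀ t1, t0⟫_ℂ).re := by rw [hcross, Complex.conj_re]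
  have hre : (⟪φ, (1 / Real.sqrt 2 : ℂ) • (t0 - t1)⟫_ℂ).re = p₀ + p₁ - 1 := by
    have h := congrArg Complex.re hz
    norm_num [Complex.mul_re, Complex.add_re, Complex.sub_re, Complex.add_im, Complex.sub_im,
      Complex.one_re, Complex.one_im, c1, c2, hv0, hv1] at h
    rw [hz]
    norm_num [Complex.mul_re, Complex.add_re, Complex.sub_re, Complex.add_im, Complex.sub_im,
      Complex.one_re, Complex.one_im, c1, c2, hv0, hv1]
    ring
  calc ‖⟪φ, (1 / Real.sqrt 2 : ℂ) • (t0 - t1)⟫_ℂ‖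
      ≥ (⟪φ, (1 / Real.sqrt 2 : ℂ) • (t0 - t1)⟫_ℂ).re := Complex.re_le_norm _
    _ = p₀ + p₁ - 1 := hre
end
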